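/- Let G be a rooted directed graph on a finite vertex set V with at least 2 vertices, containing all self-loops, whose root component is a singleton Root(G) = {q}, and let p ∈ V with p ≠ q. Then the graph G' obtained from G by adding the edge (p,q) is rooted, and its root component Root(G') contains both p and q; in particular Root(G') ≠ {q}. -/

import Mathlib

/-- `R` is a root component of the directed graph `G`: a nonempty set of vertices
that is strongly connected (any two members are joined by a directed path in `G`)
and has no incoming edge from outside. -/
def IsRootComp {V : Type*} (G : V → V → Prop) (R : Set V) : Prop :=
  R.Nonempty ∧ (∀ u ∈ R, ∀ v ∈ R, Relation.ReflTransGen G u v) ∧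
    ∀ p q : V, G p q → q ∈ R → p ∈ R

/-- If `G` (with self-loops, at least 2 vertices) is rooted with singleton root
component `{q}` and `p ≠ q`, then the graph obtained by adding the edge `(p, q)`
is rooted and its root component contains both `p` and `q`; in particular it is
not `{q}`. -/
theorem add_edge_to_singleton_root {V : Type*} [Fintype V] (h2 : 2 ≤ Fintype.card V)
    (G : V → V → Prop) (hself : ∀ p, G p p) (q : V)
    (hR : IsRootComp G {q}) (hRu : ∀ S : Set V, IsRootComp G S → S = {q})
    (p : V) (hpq : p ≠ q) :
    ∃ R' : Set V,
      IsRootComp (fun u v => G u v ∨ (u = p ∧ v = q)) R' ∧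
      (∀ S : Set V, IsRootComp (fun u v => G u v ∨ (u = p ∧ v = q)) S → S = R') ∧
      p ∈ R' ∧ q ∈ R' ∧ R' ≠ ({q} : Set V) := by
  classical
  set G' : V → V → Prop := fun u v => G u v ∨ (u = p ∧ v = q) with hG'
  -- q reaches every vertex in G
  have hreach : ∀ v : V, Relation.ReflTransGen G q v := by
    intro v
    have htrans : IsTrans V (fun a b : V =>
        Relation.ReflTransGen G a b ∧ ¬ Relation.ReflTransGen G b a) := by
      constructor
      rintro a b c ⟨hab, hba⟩ ⟨hbc, hcb⟩
      exact ⟨hab.trans hbc, fun hca => hba (hbc.trans hca)⟩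
    have hirrefl : IsIrrefl V (fun a b : V =>
        Relation.ReflTransGen G a b ∧ ¬ Relation.ReflTransGen G b a) := by
      constructor
      rintro a ⟨h1, h2⟩
      exact h2 h1
    have hwf : WellFounded (fun a b : V =>
        Relation.ReflTransGen G a b ∧ ¬ Relation.ReflTransGen G b a) :=
      Finite.wellFounded_of_trans_of_irrefl _
    obtain ⟨u, hu, hmin⟩ := hwf.has_min {w | Relation.ReflTransGen G w v}
      ⟨v, Relation.ReflTransGen.refl⟩
    have hRu' : IsRootComp G
        {w | Relation.ReflTransGen G u w ∧ Relation.ReflTransGen G w u} := by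
      refine ⟨⟨u, Relation.ReflTransGen.refl, Relation.ReflTransGen.refl⟩, ?_, ?_⟩
      · rintro a ⟨_, hau⟩ b ⟨hub, _⟩
        exact hau.trans hub
      · rintro a b hab ⟨hub, hbu⟩
        have hau : Relation.ReflTransGen G a u :=
          (Relation.ReflTransGen.single hab).trans hbu
        have haA : a ∈ {w | Relation.ReflTransGen G w v} := (hau.trans hu)
        have := hmin a haA
        push_neg at this
        exact ⟨this hau, hau⟩
    have heq := hRu _ hRu'
    have huq : u = q := by
      have : u ∈ ({q} : Set V) := by
        rw [← heq]; exact ⟨Relation.ReflTransGen.refl, Relation.ReflTransGen.refl⟩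
      simpa using this
    exact huq ▸ hu
  have hlift : ∀ a b : V, Relation.ReflTransGen G a b → Relation.ReflTransGen G' a b :=
    fun a b h => Relation.ReflTransGen.mono (fun x y hxy => Or.inl hxy) a b h
  refine ⟨{v | Relation.ReflTransGen G' v q}, ?_, ?_, ?_, Relation.ReflTransGen.refl, ?_⟩
  · refine ⟨⟨q, Relation.ReflTransGen.refl⟩, ?_, ?_⟩
    · intro a ha b hb
      exact ha.trans (hlift _ _ (hreach b))
    · intro a b hab hb
      exact Relation.ReflTransGen.head hab hb
  · intro S hS
    obtain ⟨hSne, hSconn, hSclosed⟩ := hS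
    have hclosure : ∀ a b : V, Relation.ReflTransGen G' a b → b ∈ S → a ∈ S := by
      intro a b hab
      induction hab using Relation.ReflTransGen.head_induction_on with
      | refl => exact fun h => h
      | head hxy _ ih => exact fun h => hSclosed _ _ hxy (ih h)
    obtain ⟨s, hs⟩ := hSne
    have hqS : q ∈ S := hclosure q s (hlift _ _ (hreach s)) hs
    ext v
    constructor
    · intro hv
      exact hSconn v hv q hqS
    · intro hv
      exact hclosure v q hv hqS
  · exact Relation.ReflTransGen.single (Or.inr ⟨rfl, rfl⟩)
  · intro h
    have : p ∈ ({q} : Set V) := by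
      rw [← h]; exact Relation.ReflTransGen.single (Or.inr ⟨rfl, rfl⟩)
    exact hpq (by simpa using this)
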